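/- Let A₁, A₂ be k₁×n₁ matrices and B₁, B₂ be k₂×n₂ matrices over a finite field K with n_{A₁} ≥ n_{A₂}. Let M be the vertical stacking of A₁⊗B₁ and A₂⊗B₂. Then n_M ≥ min( n_{A₁}, n_{A₂}·n_{B₁}, n_{B₁₊₂} ), where B₁₊₂ is the vertical stacking of B₁ and B₂. -/

import Mathlib

open Kronecker

/-- `colIndepMax A` is the largest `j` (at most the number of columns) such that
every set of `j` columns of `A` is linearly independent. -/
noncomputable def colIndepMax {K m n : Type*} [Field K] [Fintype n] (A : Matrix m n K) : ℕ :=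
  sSup {j | j ≤ Fintype.card n ∧
    ∀ s : Finset n, s.card = j →
      LinearIndependent K (fun i : {x // x ∈ s} => A.transpose i.1)}

section aux
variable {K m n : Type*} [Field K] [Fintype n]

lemma colIndepMax_zero_mem (A : Matrix m n K) :
    (0 : ℕ) ∈ {j | j ≤ Fintype.card n ∧ ∀ s : Finset n, s.card = j →
      LinearIndependent K (fun i : {x // x ∈ s} => A.transpose i.1)} := by
  refine ⟨Nat.zero_le _, fun s hs => ?_⟩
  have : IsEmpty {x // x ∈ s} := ⟨fun x => absurd x.2 (by simp [Finset.card_eq_zero.mp hs])⟩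
  exact linearIndependent_empty_type

lemma colIndepMax_le_card (A : Matrix m n K) : colIndepMax A ≤ Fintype.card n :=
  csSup_le ⟨0, colIndepMax_zero_mem A⟩ fun _ hx => hx.1

lemma le_colIndepMax (A : Matrix m n K) (d : ℕ) (hd : d ≤ Fintype.card n)
    (hind : ∀ s : Finset n, s.card = d →
      LinearIndependent K (fun i : {x // x ∈ s} => A.transpose i.1)) :
    d ≤ colIndepMax A :=
  le_csSup ⟨Fintype.card n, fun _ hx => hx.1⟩ ⟨hd, hind⟩

lemma cols_indep (A : Matrix m n K) (t : Finset n) (ht : t.card ≤ colIndepMax A) :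
    LinearIndependent K (fun i : {x // x ∈ t} => A.transpose i.1) := by
  classical
  have hmem := Nat.sSup_mem ⟨0, colIndepMax_zero_mem A⟩
      ⟨Fintype.card n, fun _ hx => hx.1⟩
  obtain ⟨hle, hP⟩ := hmem
  obtain ⟨u, htu, hu⟩ := Finset.exists_superset_card_eq ht hle
  have hind := hP u hu
  have h2 : LinearIndependent K ((fun i : {x // x ∈ u} => A.transpose i.1) ∘
      (fun x : {x // x ∈ t} => (⟨x.1, htu x.2⟩ : {x // x ∈ u}))) :=
    hind.comp _ (fun a b hab => Subtype.ext (Subtype.mk_eq_mk.mp hab))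
  exact h2

lemma zero_of_sum (A : Matrix m n K) (t : Finset n) (ht : t.card ≤ colIndepMax A)
    (f : n → K) (hf : ∀ i, i ∉ t → f i = 0)
    (hsum : ∀ a, ∑ i, f i * A a i = 0) : ∀ i, f i = 0 := by
  classical
  have hli := cols_indep A t ht
  rw [Fintype.linearIndependent_iff] at hli
  have key : ∑ i : {x // x ∈ t}, f i.1 • A.transpose i.1 = 0 := by
    rw [Finset.sum_coe_sort t (fun i => f i • A.transpose i)]
    rw [Finset.sum_subset (Finset.subset_univ t) (fun i _ hi => by rw [hf i hi]; simp)]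
    funext a
    simp only [Finset.sum_apply, Pi.smul_apply, Matrix.transpose_apply, smul_eq_mul,
      Pi.zero_apply]
    exact hsum a
  have h0 := hli _ key
  intro i
  by_cases hi : i ∈ t
  · exact h0 ⟨i, hi⟩
  · exact hf i hi

end aux

theorem stmt2 {K : Type*} [Field K] {k₁ k₂ n₁ n₂ : ℕ}
    (A₁ A₂ : Matrix (Fin k₁) (Fin n₁) K) (B₁ B₂ : Matrix (Fin k₂) (Fin n₂) K)
    (h : colIndepMax A₂ ≤ colIndepMax A₁) :
    min (colIndepMax A₁) (min (colIndepMax A₂ * colIndepMax B₁)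
        (colIndepMax (Matrix.fromRows B₁ B₂))) ≤
      colIndepMax (Matrix.fromRows (A₁ ⊗ₖ B₁) (A₂ ⊗ₖ B₂)) := by
  classical
  set d := min (colIndepMax A₁) (min (colIndepMax A₂ * colIndepMax B₁)
      (colIndepMax (Matrix.fromRows B₁ B₂))) with hddef
  have hdA1 : d ≤ colIndepMax A₁ := min_le_left _ _
  have hdmul : d ≤ colIndepMax A₂ * colIndepMax B₁ :=
    le_trans (min_le_right _ _) (min_le_left _ _)
  have hdB : d ≤ colIndepMax (Matrix.fromRows B₁ B₂) :=
    le_trans (min_le_right _ _) (min_le_right _ _)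
  have hn1 : d ≤ n₁ := le_trans hdA1 (by simpa using colIndepMax_le_card A₁)
  have hn2 : d ≤ n₂ := le_trans hdB (by simpa using colIndepMax_le_card (Matrix.fromRows B₁ B₂))
  apply le_colIndepMax
  · simp only [Fintype.card_prod, Fintype.card_fin]
    rcases Nat.eq_zero_or_pos d with h0 | h0
    · omega
    · calc d ≤ n₁ := hn1
        _ ≤ n₁ * n₂ := Nat.le_mul_of_pos_right _ (lt_of_lt_of_le h0 hn2)
  intro s hs
  rw [Fintype.linearIndependent_iff]
  intro g hg
  set M := Matrix.fromRows (A₁ ⊗ₖ B₁) (A₂ ⊗ₖ B₂) with hM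
  set c : Fin n₁ × Fin n₂ → K := fun p => if hp : p ∈ s then g ⟨p, hp⟩ else 0 with hc
  have hc0 : ∀ p, p ∉ s → c p = 0 := fun p hp => dif_neg hp
  -- the linear relation, row by row
  have hrow : ∀ r, ∑ p, c p * M r p = 0 := by
    intro r
    have h1 := congrFun hg r
    simp only [Finset.sum_apply, Pi.smul_apply, Matrix.transpose_apply, smul_eq_mul,
      Pi.zero_apply] at h1
    calc ∑ p, c p * M r p
        = ∑ p ∈ s, c p * M r p :=
          (Finset.sum_subset (Finset.subset_univ s)
            (fun p _ hp => by rw [hc0 p hp]; ring)).symm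
      _ = ∑ p : {x // x ∈ s}, c p.1 * M r p.1 :=
          (Finset.sum_coe_sort s (fun p => c p * M r p)).symm
      _ = ∑ p : {x // x ∈ s}, g p * M r p.1 := by
          refine Finset.sum_congr rfl fun p _ => ?_
          have : c p.1 = g p := by rw [hc]; exact dif_pos p.2
          rw [this]
      _ = 0 := h1
  -- column sums against B₁ and B₂
  set v : Fin n₁ → Fin k₂ → K := fun i b => ∑ j, c (i, j) * B₁ b j with hv
  set w : Fin n₁ → Fin k₂ → K := fun i b => ∑ j, c (i, j) * B₂ b j with hw
  set T : Finset (Fin n₁) := s.image Prod.fst with hT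
  have hcT : ∀ i, i ∉ T → ∀ j, c (i, j) = 0 := by
    intro i hi j
    apply hc0
    intro hmem
    exact hi (Finset.mem_image_of_mem Prod.fst hmem)
  have hTcard : T.card ≤ d := hs ▸ Finset.card_image_le
  have hv0 : ∀ b i, v i b = 0 := by
    intro b
    refine zero_of_sum A₁ T (le_trans hTcard hdA1) (fun i => v i b) ?_ ?_
    · intro i hi
      simp only [hv]
      exact Finset.sum_eq_zero fun j _ => by rw [hcT i hi j]; ring
    · intro a
      have h2 := hrow (Sum.inl (a, b))
      simp only [hM, Matrix.fromRows_apply_inl, Matrix.kroneckerMap_apply] at h2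
      calc ∑ i, v i b * A₁ a i
          = ∑ i, ∑ j, c (i, j) * (A₁ a i * B₁ b j) := by
            refine Finset.sum_congr rfl fun i _ => ?_
            rw [hv, Finset.sum_mul]
            exact Finset.sum_congr rfl fun j _ => by ring
        _ = ∑ p : Fin n₁ × Fin n₂, c p * (A₁ a p.1 * B₁ b p.2) := by
            rw [Fintype.sum_prod_type]
        _ = 0 := h2
  -- all coefficients vanish
  have hall : ∀ p, c p = 0 := by
    by_cases hB1 : colIndepMax B₁ = 0
    · have hd0 : d = 0 := by
        have h' := hdmul
        rw [hB1, Nat.mul_zero] at h'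
        omega
      intro p
      apply hc0
      intro hmem
      have : s = ∅ := Finset.card_eq_zero.mp (by omega)
      simp [this] at hmem
    · have hB1pos : 1 ≤ colIndepMax B₁ := Nat.pos_of_ne_zero hB1
      set Active : Finset (Fin n₁) :=
        Finset.univ.filter (fun i => ∃ j, c (i, j) ≠ 0) with hA
      set J : Fin n₁ → Finset (Fin n₂) :=
        fun i => Finset.univ.filter (fun j => c (i, j) ≠ 0) with hJ
      have hJmem : ∀ i j, j ∉ J i → c (i, j) = 0 := by
        intro i j hj
        by_contra hne
        exact hj (by simp [hJ, hne])
      have hJfiber : ∀ i, (J i).card ≤ (s.filter (fun p => p.1 = i)).card := by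
        intro i
        refine Finset.card_le_card_of_injOn (fun j => (i, j)) ?_ ?_
        · intro j hj
          simp only [hJ, Finset.mem_coe, Finset.mem_filter, Finset.mem_univ, true_and] at hj
          refine Finset.mem_filter.mpr ⟨?_, rfl⟩
          by_contra hmem
          exact hj (hc0 _ hmem)
        · intro a _ b _ hab
          exact (Prod.mk.injEq _ _ _ _).mp hab |>.2
      have hJbig : ∀ i ∈ Active, colIndepMax B₁ + 1 ≤ (J i).card := by
        intro i hi
        by_contra hcon
        push_neg at hcon
        have hz := zero_of_sum B₁ (J i) (by omega) (fun j => c (i, j))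
          (fun j hj => hJmem i j hj)
          (fun b => by simpa [hv] using hv0 b i)
        obtain ⟨j, hjne⟩ := (Finset.mem_filter.mp hi).2
        exact hjne (hz j)
      have hsumcard : ∑ i ∈ Active, (J i).card ≤ d := by
        calc ∑ i ∈ Active, (J i).card
            ≤ ∑ i ∈ Active, (s.filter (fun p => p.1 = i)).card :=
              Finset.sum_le_sum fun i _ => hJfiber i
          _ ≤ ∑ i : Fin n₁, (s.filter (fun p => p.1 = i)).card :=
              Finset.sum_le_sum_of_subset (Finset.subset_univ _)
          _ = s.card :=
              (Finset.card_eq_sum_card_fiberwise (fun p _ => Finset.mem_univ p.1)).symm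
          _ = d := hs
      have hActcard : Active.card * (colIndepMax B₁ + 1) ≤ d := by
        calc Active.card * (colIndepMax B₁ + 1)
            = ∑ _i ∈ Active, (colIndepMax B₁ + 1) := by
              rw [Finset.sum_const, smul_eq_mul, mul_comm]
          _ ≤ ∑ i ∈ Active, (J i).card := Finset.sum_le_sum hJbig
          _ ≤ d := hsumcard
      have hAct2 : Active.card ≤ colIndepMax A₂ := by
        by_contra hcon
        push_neg at hcon
        nlinarith [hdmul, hActcard, hB1pos]
      have hActmem : ∀ i, i ∉ Active → ∀ j, c (i, j) = 0 := by
        intro i hi j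
        by_contra hne
        apply hi
        simp only [hA, Finset.mem_filter, Finset.mem_univ, true_and]
        exact ⟨j, hne⟩
      have hw0 : ∀ b i, w i b = 0 := by
        intro b
        refine zero_of_sum A₂ Active hAct2 (fun i => w i b) ?_ ?_
        · intro i hi
          simp only [hw]
          exact Finset.sum_eq_zero fun j _ => by rw [hActmem i hi j]; ring
        · intro a
          have h2 := hrow (Sum.inr (a, b))
          simp only [hM, Matrix.fromRows_apply_inr, Matrix.kroneckerMap_apply] at h2
          calc ∑ i, w i b * A₂ a i
              = ∑ i, ∑ j, c (i, j) * (A₂ a i * B₂ b j) := by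
                refine Finset.sum_congr rfl fun i _ => ?_
                rw [hw, Finset.sum_mul]
                exact Finset.sum_congr rfl fun j _ => by ring
            _ = ∑ p : Fin n₁ × Fin n₂, c p * (A₂ a p.1 * B₂ b p.2) := by
                rw [Fintype.sum_prod_type]
            _ = 0 := h2
      intro p
      have hJd : (J p.1).card ≤ d := by
        calc (J p.1).card ≤ (s.filter (fun q => q.1 = p.1)).card := hJfiber p.1
          _ ≤ s.card := Finset.card_le_card (Finset.filter_subset _ _)
          _ = d := hs
      have hz := zero_of_sum (Matrix.fromRows B₁ B₂) (J p.1) (le_trans hJd hdB)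
        (fun j => c (p.1, j)) (fun j hj => hJmem p.1 j hj) ?_
      · have := hz p.2
        simpa using this
      · intro r
        cases r with
        | inl b =>
          simp only [Matrix.fromRows_apply_inl]
          simpa [hv] using hv0 b p.1
        | inr b =>
          simp only [Matrix.fromRows_apply_inr]
          simpa [hw] using hw0 b p.1
  intro x
  simpa [hc, x.2] using hall x.1
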